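/- arXiv:1203.4027 — 2 statements merged into one kernel-verified Lean document; each statement's English description precedes it below -/
import Mathlib

section
/- Let α ≥ 0, β ≥ 0 and C > 0, and let (c_j)_{j≥0} be a sequence of real numbers such that c_j/(C j^α) → 1 as j → ∞. Then lim_{k→∞} (Σ_{j=0}^{k−1} c_j (k−j)^β) / k^{α+β+1} = C ∫₀¹ x^α (1−x)^β dx. -/
open Filter Topology

open MeasureTheory in

lemma riemann_aux (f : ℝ → ℝ) (hf : Continuous f) :
    Tendsto (fun n : ℕ => (∑ j ∈ Finset.range n, f ((j : ℝ) / n)) / n) atTop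
      (𝓝 (∫ x in (0:ℝ)..1, f x)) := by
  rw [Metric.tendsto_atTop]
  intro ε hε
  obtain ⟨δ, hδ, hδ'⟩ := Metric.uniformContinuousOn_iff.mp
    (isCompact_Icc.uniformContinuousOn_of_continuous (hf.continuousOn)
      : UniformContinuousOn f (Set.Icc (0:ℝ) 1)) (ε/2) (by positivity)
  obtain ⟨N, hN⟩ := exists_nat_gt (max 1 (1/δ))
  refine ⟨N, fun n hn => ?_⟩
  have hn1 : (1:ℝ) < n := lt_of_le_of_lt (le_max_left _ _) (hN.trans_le (by exact_mod_cast hn))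
  have hn0 : (0:ℝ) < n := by linarith
  have hnδ : 1 / (n:ℝ) < δ := by
    rw [div_lt_iff₀ hn0]
    have : 1/δ < (n:ℝ) := lt_of_le_of_lt (le_max_right _ _) (hN.trans_le (by exact_mod_cast hn))
    rw [div_lt_iff₀ hδ] at this
    linarith [this]
  -- split integral
  have hint : ∀ k < n, IntervalIntegrable f volume ((k:ℝ)/n) (((k:ℕ)+1:ℝ)/n) := fun k _ =>
    hf.intervalIntegrable _ _
  have hsplit : ∑ k ∈ Finset.range n, ∫ x in ((k:ℝ)/n)..(((k:ℝ)+1)/n), f x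
      = ∫ x in (0:ℝ)..1, f x := by
    have := intervalIntegral.sum_integral_adjacent_intervals (μ := volume) (f := f)
      (a := fun k : ℕ => (k:ℝ)/n) (n := n) (fun k _ => hf.intervalIntegrable _ _)
    simpa [div_self hn0.ne'] using this
  rw [Real.dist_eq, ← hsplit, Finset.sum_div, ← Finset.sum_sub_distrib]
  have key : ∀ j ∈ Finset.range n,
      |f ((j:ℝ)/n) / n - ∫ x in ((j:ℝ)/n)..(((j:ℝ)+1)/n), f x| ≤ (ε/2) * (1/n) := by
    intro j hj
    have hjn : (j:ℝ) < n := by exact_mod_cast Finset.mem_range.mp hj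
    have hle : ((j:ℝ))/n ≤ ((j:ℝ)+1)/n := by
      gcongr; linarith
    have hconst : f ((j:ℝ)/n) / n = ∫ _x in ((j:ℝ)/n)..(((j:ℝ)+1)/n), f ((j:ℝ)/n) := by
      rw [intervalIntegral.integral_const]
      have : ((j:ℝ)+1)/n - (j:ℝ)/n = 1/n := by field_simp; ring
      rw [this, smul_eq_mul]; ring
    rw [hconst, ← intervalIntegral.integral_sub (intervalIntegrable_const)
      (hf.intervalIntegrable _ _)]
    have := intervalIntegral.norm_integral_le_of_norm_le_const
      (a := (j:ℝ)/n) (b := ((j:ℝ)+1)/n) (C := ε/2)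
      (f := fun x => f ((j:ℝ)/n) - f x) ?_
    · calc |∫ x in ((j:ℝ)/n)..(((j:ℝ)+1)/n), (f ((j:ℝ)/n) - f x)| ≤ ε/2 * |((j:ℝ)+1)/n - (j:ℝ)/n| := this
        _ = ε/2 * (1/n) := by rw [show ((j:ℝ)+1)/n - (j:ℝ)/n = 1/n by field_simp; ring, abs_of_pos (by positivity)]
    · intro x hx
      rw [Set.uIoc_of_le hle] at hx
      have hx1 : (j:ℝ)/n < x := hx.1
      have hx2 : x ≤ ((j:ℝ)+1)/n := hx.2
      have hmemx : x ∈ Set.Icc (0:ℝ) 1 := by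
        constructor
        · have : (0:ℝ) ≤ (j:ℝ)/n := by positivity
          linarith
        · have : ((j:ℝ)+1)/n ≤ 1 := by
            rw [div_le_one hn0]
            have : (j:ℝ) + 1 ≤ n := by exact_mod_cast Finset.mem_range.mp hj
            linarith
          linarith
      have hmemj : (j:ℝ)/n ∈ Set.Icc (0:ℝ) 1 := by
        constructor
        · positivity
        · rw [div_le_one hn0]; linarith
      have hd : dist ((j:ℝ)/n) x < δ := by
        rw [Real.dist_eq, abs_of_nonpos (by linarith)]
        have heq : ((j:ℝ)+1)/n = (j:ℝ)/n + 1/n := by field_simp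
        have : x - (j:ℝ)/n ≤ 1/n := by linarith
        linarith
      have := hδ' _ hmemj _ hmemx hd
      rw [Real.dist_eq] at this
      exact le_of_lt (by simpa [Real.norm_eq_abs] using this)
  calc |∑ j ∈ Finset.range n, (f ((j:ℝ)/n) / n - ∫ x in ((j:ℝ)/n)..(((j:ℝ)+1)/n), f x)|
      ≤ ∑ j ∈ Finset.range n, |f ((j:ℝ)/n) / n - ∫ x in ((j:ℝ)/n)..(((j:ℝ)+1)/n), f x| :=
        Finset.abs_sum_le_sum_abs _ _
    _ ≤ ∑ _j ∈ Finset.range n, (ε/2) * (1/n) := Finset.sum_le_sum key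
    _ = ε/2 := by
        rw [Finset.sum_const, Finset.card_range, nsmul_eq_mul]
        field_simp
    _ < ε := by linarith

section helpers
open MeasureTheory

lemma lemB (α β : ℝ) (hα : 0 ≤ α) (hβ : 0 ≤ β) :
    Tendsto (fun k : ℕ =>
      (∑ j ∈ Finset.range k, (j:ℝ)^α * ((k-j:ℕ):ℝ)^β) / (k:ℝ)^(α+β+1)) atTop
      (𝓝 (∫ x in (0:ℝ)..1, x^α*(1-x)^β)) := by
  set f : ℝ → ℝ := fun x => x^α*(1-x)^β with hfdef
  have hf : Continuous f :=
    (Real.continuous_rpow_const hα).mul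
      ((continuous_const.sub continuous_id).rpow_const (fun x => Or.inr hβ))
  refine (riemann_aux f hf).congr' ?_
  filter_upwards [eventually_ge_atTop 1] with k hk
  have hk0 : (0:ℝ) < k := by exact_mod_cast hk
  rw [show (k:ℝ)^(α+β+1) = (k:ℝ)^α * (k:ℝ)^β * (k:ℝ) by
    rw [Real.rpow_add hk0, Real.rpow_add hk0, Real.rpow_one]]
  rw [Finset.sum_div, Finset.sum_div]
  refine Finset.sum_congr rfl fun j hj => ?_
  have hjk : j ≤ k := le_of_lt (Finset.mem_range.mp hj)
  have hjk' : (j:ℝ) ≤ k := by exact_mod_cast hjk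
  have hcast : ((k-j:ℕ):ℝ) = (k:ℝ) - j := by
    rw [Nat.cast_sub hjk]
  show f ((j:ℝ)/k) / k = (j:ℝ)^α * ((k-j:ℕ):ℝ)^β / ((k:ℝ)^α * (k:ℝ)^β * k)
  rw [hfdef, hcast]
  simp only []
  rw [show (1 - (j:ℝ)/k) = ((k:ℝ)-j)/k by field_simp]
  rw [Real.div_rpow (by positivity) hk0.le, Real.div_rpow (by linarith) hk0.le]
  have h1 : (k:ℝ)^α ≠ 0 := by positivity
  have h2 : (k:ℝ)^β ≠ 0 := by positivity
  field_simp

lemma lemC (α β C : ℝ) (hα : 0 ≤ α) (hβ : 0 ≤ β) (hC : 0 < C)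
    (c : ℕ → ℝ) (hc : Tendsto (fun j : ℕ => c j / (C * (j : ℝ) ^ α)) atTop (𝓝 1)) :
    Tendsto (fun k : ℕ =>
      (∑ j ∈ Finset.range k, (c j - C * (j:ℝ)^α) * ((k-j:ℕ):ℝ)^β) / (k:ℝ)^(α+β+1))
      atTop (𝓝 0) := by
  set I : ℝ := ∫ x in (0:ℝ)..1, x^α*(1-x)^β with hI
  rw [NormedAddCommGroup.tendsto_nhds_zero]
  intro ε hε
  have hM0 : (0:ℝ) < |I| + 1 := by positivity
  set δ : ℝ := ε / (2 * C * (|I| + 1)) with hδdef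
  have hδ : 0 < δ := by positivity
  -- smallness of the relative error
  obtain ⟨N₀, hN₀⟩ := Metric.tendsto_atTop.mp hc δ hδ
  set N : ℕ := max N₀ 1 with hNdef
  have hkey : ∀ j : ℕ, N ≤ j → |c j - C * (j:ℝ)^α| ≤ δ * (C * (j:ℝ)^α) := by
    intro j hj
    have hj1 : 1 ≤ j := le_trans (le_max_right _ _) hj
    have hj1' : (1:ℝ) ≤ (j:ℝ) := by exact_mod_cast hj1
    have hpow : 0 < C * (j:ℝ)^α := by positivity
    have := hN₀ j (le_trans (le_max_left _ _) hj)
    rw [Real.dist_eq] at this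
    have heq : c j / (C * (j:ℝ)^α) - 1 = (c j - C * (j:ℝ)^α) / (C * (j:ℝ)^α) := by
      field_simp
    rw [heq, abs_div, abs_of_pos hpow, div_lt_iff₀ hpow] at this
    linarith
  set M : ℝ := ∑ j ∈ Finset.range N, |c j - C * (j:ℝ)^α| with hMdef
  have hMnn : 0 ≤ M := Finset.sum_nonneg fun j _ => abs_nonneg _
  have hB := lemB α β hα hβ
  have h1 : ∀ᶠ k : ℕ in atTop,
      (∑ j ∈ Finset.range k, (j:ℝ)^α * ((k-j:ℕ):ℝ)^β) / (k:ℝ)^(α+β+1) < |I| + 1 :=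
    hB.eventually_lt_const (by cases abs_cases I <;> linarith)
  have h2 : ∀ᶠ k : ℕ in atTop, M * (1/(k:ℝ)) < ε/2 := by
    have : Tendsto (fun k : ℕ => M * (1/(k:ℝ))) atTop (𝓝 (M * 0)) :=
      tendsto_const_nhds.mul tendsto_one_div_atTop_nhds_zero_nat
    rw [mul_zero] at this
    exact this.eventually_lt_const (by linarith)
  filter_upwards [h1, h2, eventually_ge_atTop N, eventually_ge_atTop 1] with k hk1 hk2 hkN hk1'
  have hk0 : (0:ℝ) < k := by exact_mod_cast hk1'
  have hk1r : (1:ℝ) ≤ k := by exact_mod_cast hk1'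
  have hD : (0:ℝ) < (k:ℝ)^(α+β+1) := by positivity
  set R : ℝ := ∑ j ∈ Finset.range k, (j:ℝ)^α * ((k-j:ℕ):ℝ)^β with hRdef
  set E : ℝ := ∑ j ∈ Finset.range k, (c j - C * (j:ℝ)^α) * ((k-j:ℕ):ℝ)^β with hEdef
  have hEbound : |E| ≤ M * (k:ℝ)^β + δ * C * R := by
    have step1 : |E| ≤ ∑ j ∈ Finset.range k, |c j - C * (j:ℝ)^α| * ((k-j:ℕ):ℝ)^β := by
      refine (Finset.abs_sum_le_sum_abs _ _).trans (le_of_eq ?_)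
      refine Finset.sum_congr rfl fun j _ => ?_
      rw [abs_mul, abs_of_nonneg (by positivity : (0:ℝ) ≤ ((k-j:ℕ):ℝ)^β)]
    have hsplit : ∑ j ∈ Finset.range k, |c j - C * (j:ℝ)^α| * ((k-j:ℕ):ℝ)^β
        = (∑ j ∈ Finset.Ico 0 N, |c j - C * (j:ℝ)^α| * ((k-j:ℕ):ℝ)^β)
          + ∑ j ∈ Finset.Ico N k, |c j - C * (j:ℝ)^α| * ((k-j:ℕ):ℝ)^β := by
      rw [Finset.sum_Ico_consecutive _ (Nat.zero_le N) hkN, Finset.range_eq_Ico]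
    have first : ∑ j ∈ Finset.Ico 0 N, |c j - C * (j:ℝ)^α| * ((k-j:ℕ):ℝ)^β
        ≤ M * (k:ℝ)^β := by
      rw [hMdef, Finset.sum_mul, Finset.range_eq_Ico]
      refine Finset.sum_le_sum fun j _ => ?_
      have h1 : ((k-j:ℕ):ℝ)^β ≤ (k:ℝ)^β :=
        Real.rpow_le_rpow (by positivity) (by exact_mod_cast Nat.sub_le k j) hβ
      exact mul_le_mul_of_nonneg_left h1 (abs_nonneg _)
    have second : ∑ j ∈ Finset.Ico N k, |c j - C * (j:ℝ)^α| * ((k-j:ℕ):ℝ)^β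
        ≤ δ * C * R := by
      have step : ∑ j ∈ Finset.Ico N k, |c j - C * (j:ℝ)^α| * ((k-j:ℕ):ℝ)^β
          ≤ ∑ j ∈ Finset.Ico N k, δ * C * ((j:ℝ)^α * ((k-j:ℕ):ℝ)^β) := by
        refine Finset.sum_le_sum fun j hj => ?_
        have hjN : N ≤ j := (Finset.mem_Ico.mp hj).1
        have := hkey j hjN
        calc |c j - C * (j:ℝ)^α| * ((k-j:ℕ):ℝ)^β
            ≤ (δ * (C * (j:ℝ)^α)) * ((k-j:ℕ):ℝ)^β :=
              mul_le_mul_of_nonneg_right this (by positivity)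
          _ = δ * C * ((j:ℝ)^α * ((k-j:ℕ):ℝ)^β) := by ring
      refine step.trans ?_
      rw [← Finset.mul_sum, hRdef]
      refine mul_le_mul_of_nonneg_left ?_ (by positivity)
      refine Finset.sum_le_sum_of_subset_of_nonneg ?_ (fun j _ _ => by positivity)
      rw [Finset.range_eq_Ico]
      exact Finset.Ico_subset_Ico (Nat.zero_le N) le_rfl
    calc |E| ≤ _ := step1
      _ = _ := hsplit
      _ ≤ M * (k:ℝ)^β + δ * C * R := add_le_add first second
  have hkβ : (k:ℝ)^β / (k:ℝ)^(α+β+1) ≤ 1/(k:ℝ) := by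
    rw [← Real.rpow_sub hk0]
    calc (k:ℝ)^(β - (α+β+1)) ≤ (k:ℝ)^(-1:ℝ) :=
        Real.rpow_le_rpow_of_exponent_le hk1r (by linarith)
      _ = 1/(k:ℝ) := by rw [Real.rpow_neg_one, one_div]
  have hRle : R / (k:ℝ)^(α+β+1) ≤ |I| + 1 := le_of_lt hk1
  have hδC : δ * C * (|I| + 1) = ε / 2 := by
    rw [hδdef]; field_simp
  calc ‖E / (k:ℝ)^(α+β+1)‖ = |E| / (k:ℝ)^(α+β+1) := by
        rw [Real.norm_eq_abs, abs_div, abs_of_pos hD]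
    _ ≤ (M * (k:ℝ)^β + δ * C * R) / (k:ℝ)^(α+β+1) := by gcongr
    _ = M * ((k:ℝ)^β / (k:ℝ)^(α+β+1)) + δ * C * (R / (k:ℝ)^(α+β+1)) := by
        rw [add_div, mul_div_assoc, mul_div_assoc]
    _ ≤ M * (1/(k:ℝ)) + δ * C * (|I| + 1) := by
        refine add_le_add (mul_le_mul_of_nonneg_left hkβ hMnn)
          (mul_le_mul_of_nonneg_left hRle (by positivity))
    _ < ε/2 + ε/2 := by rw [hδC]; linarith
    _ = ε := by ring

end helpers

/-- If `c_j ∼ C j^α` as `j → ∞` (i.e. `c_j/(C j^α) → 1`), then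
`∑_{j=0}^{k−1} c_j (k−j)^β ∼ C k^{α+β+1} ∫₀¹ x^α (1−x)^β dx` as `k → ∞`. -/
theorem riemann_sum_asymptotics (α β C : ℝ) (hα : 0 ≤ α) (hβ : 0 ≤ β) (hC : 0 < C)
    (c : ℕ → ℝ) (hc : Tendsto (fun j : ℕ => c j / (C * (j : ℝ) ^ α)) atTop (𝓝 1)) :
    Tendsto
      (fun k : ℕ =>
        (∑ j ∈ Finset.range k, c j * ((k - j : ℕ) : ℝ) ^ β) / (k : ℝ) ^ (α + β + 1))
      atTop (𝓝 (C * ∫ x in (0:ℝ)..1, x ^ α * (1 - x) ^ β)) := by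
  have hB := (lemB α β hα hβ).const_mul C
  have hE := lemC α β C hα hβ hC c hc
  have := hB.add hE
  rw [add_zero] at this
  refine this.congr fun k => ?_
  have hsum : ∑ j ∈ Finset.range k, c j * ((k - j : ℕ) : ℝ) ^ β
      = C * (∑ j ∈ Finset.range k, (j:ℝ)^α * ((k-j:ℕ):ℝ)^β)
        + ∑ j ∈ Finset.range k, (c j - C * (j:ℝ)^α) * ((k-j:ℕ):ℝ)^β := by
    rw [Finset.mul_sum, ← Finset.sum_add_distrib]
    exact Finset.sum_congr rfl fun j _ => by ring
  rw [hsum, add_div, mul_div_assoc]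
end

section
/- Let d ≥ 1 and 1 < p < 1 + 4/d. Then for every m > 0 and every A > 0, sup_{0 < h ≤ A} E_min(m,h) < 0; that is, there exists c > 0 such that E_min(m,h) ≤ −c for every h ∈ (0, A]. -/
open MeasureTheory Filter Topology
open scoped ENNReal

noncomputable section

/-- The lattice `ℤ^d`. -/
abbrev ZLat (d : ℕ) := Fin d → ℤ

/-- Mass of `v : ℤ^d → ℂ` at grid size `h`:  `M_h(v) = h^d ∑_x |v x|²`. -/
def massZ (d : ℕ) (h : ℝ) (v : ZLat d → ℂ) : ℝ :=
  h ^ d * ∑' x : ZLat d, ‖v x‖ ^ 2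

/-- Gradient term `G_h(v) = (h^{d-2}/2) ∑_{x∼y} |v x - v y|²`, the sum being over
ordered pairs of neighbours, grouped here by `x` and the `2d` neighbours `x ± eᵢ`. -/
def gradZ (d : ℕ) (h : ℝ) (v : ZLat d → ℂ) : ℝ :=
  h ^ d / h ^ 2 / 2 *
    ∑' x : ZLat d, ∑ i : Fin d,
      (‖v (x + Pi.single i 1) - v x‖ ^ 2 + ‖v (x - Pi.single i 1) - v x‖ ^ 2)

/-- Nonlinear term `N_h(v) = (h^d/(p+1)) ∑_x |v x|^{p+1}`. -/
def nonlinZ (d : ℕ) (p h : ℝ) (v : ZLat d → ℂ) : ℝ :=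
  h ^ d / (p + 1) * ∑' x : ZLat d, ‖v x‖ ^ (p + 1)

/-- Energy `H_h(v) = G_h(v) - N_h(v)`. -/
def energyZ (d : ℕ) (p h : ℝ) (v : ZLat d → ℂ) : ℝ :=
  gradZ d h v - nonlinZ d p h v

/-- `ℓ²(ℤ^d)`. -/
def ell2 (d : ℕ) : Set (ZLat d → ℂ) := {v | Summable fun x => ‖v x‖ ^ 2}

/-- `E_min(m,h) = inf {H_h(v) : v ∈ ℓ²(ℤ^d), M_h(v) = m}`. -/
def Emin (d : ℕ) (p h m : ℝ) : ℝ :=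
  sInf (energyZ d p h '' {v ∈ ell2 d | massZ d h v = m})


open Finset

noncomputable def tent (N : ℕ) (k : ℤ) : ℝ := max 0 (1 - |(k:ℝ) - N| / N)

section tent
variable {N : ℕ} (hN : 1 ≤ N)
include hN

omit hN in lemma tent_nonneg (k : ℤ) : 0 ≤ tent N k := le_max_left _ _
lemma tent_le_one (k : ℤ) : tent N k ≤ 1 := by
  have h : (0:ℝ) ≤ |(k:ℝ) - N| / N := by positivity
  simp only [tent, max_le_iff]; constructor <;> linarith

lemma tent_eq_zero {k : ℤ} (h : k ≤ 0 ∨ 2*N ≤ k) : tent N k = 0 := by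
  have hN' : (0:ℝ) < N := by exact_mod_cast hN
  have : (N:ℝ) ≤ |(k:ℝ) - N| := by
    rcases h with h | h
    · have : (k:ℝ) ≤ 0 := by exact_mod_cast h
      rw [abs_of_nonpos (by linarith)]; linarith
    · have : (2*N:ℝ) ≤ (k:ℝ) := by exact_mod_cast h
      rw [abs_of_nonneg (by linarith)]; linarith
  have : (1:ℝ) ≤ |(k:ℝ) - N| / N := (one_le_div hN').mpr this
  simp only [tent]; rw [max_eq_left]; linarith

lemma tent_lip (k l : ℤ) (h : |k - l| ≤ 1) : |tent N k - tent N l| ≤ 1 / N := by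
  have hN' : (0:ℝ) < N := by exact_mod_cast hN
  simp only [tent, max_comm (0:ℝ)]
  refine le_trans (abs_max_sub_max_le_abs _ _ _) ?_
  have : (1 - |(k:ℝ) - N| / N) - (1 - |(l:ℝ) - N| / N) = (|(l:ℝ) - N| - |(k:ℝ) - N|)/N := by
    ring
  rw [this, abs_div, abs_of_pos hN', div_le_div_iff_of_pos_right hN']
  refine le_trans (abs_abs_sub_abs_le_abs_sub _ _) ?_
  have : ((l:ℝ) - N) - ((k:ℝ) - N) = ((l - k : ℤ) : ℝ) := by push_cast; ring
  rw [this, ← Int.cast_abs]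
  have : |l - k| ≤ 1 := by rwa [abs_sub_comm] at h
  exact_mod_cast this

lemma tent_ge_half {k : ℤ} (h : 2 * |k - N| ≤ N) : 1/2 ≤ tent N k := by
  have hN' : (0:ℝ) < N := by exact_mod_cast hN
  have h' : 2 * |(k:ℝ) - N| ≤ N := by
    rw [show (k:ℝ) - N = ((k - N : ℤ):ℝ) by push_cast; ring, ← Int.cast_abs]
    exact_mod_cast h
  have : |(k:ℝ) - N| / N ≤ 1/2 := by
    rw [div_le_div_iff₀ hN' two_pos]; linarith
  refine le_trans ?_ (le_max_right _ _); linarith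
end tent

section sums
variable {N : ℕ} (hN : 1 ≤ N)

/-- support finset -/
def tentS (N : ℕ) : Finset ℤ := Finset.Icc (-1 : ℤ) (2*(N:ℤ)+1)

noncomputable def gterm (N : ℕ) (k : ℤ) : ℝ :=
  (tent N (k+1) - tent N k)^2 + (tent N (k-1) - tent N k)^2

include hN

lemma tent_zero_outside {k : ℤ} (h : k ∉ tentS N) : tent N k = 0 := by
  simp only [tentS, Finset.mem_Icc, not_and_or, not_le] at h
  exact tent_eq_zero hN (by omega)

lemma gterm_zero_outside {k : ℤ} (h : k ∉ tentS N) : gterm N k = 0 := by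
  simp only [tentS, Finset.mem_Icc, not_and_or, not_le] at h
  have h1 : tent N (k+1) = 0 := tent_eq_zero hN (by omega)
  have h2 : tent N (k-1) = 0 := tent_eq_zero hN (by omega)
  have h3 : tent N k = 0 := tent_eq_zero hN (by omega)
  simp [gterm, h1, h2, h3]

lemma card_tentS : (tentS N).card = 2*N+3 := by
  simp only [tentS, Int.card_Icc]; omega

def tentP (N : ℕ) : Finset ℤ := Finset.Icc ((N:ℤ) - N/2) ((N:ℤ) + N/2)

omit hN in
lemma tentP_subset : tentP N ⊆ tentS N := by
  intro k hk
  simp only [tentP, Finset.mem_Icc] at hk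
  simp only [tentS, Finset.mem_Icc]
  have : (N:ℤ)/2 ≤ N := by omega
  omega

lemma card_tentP_ge : (N : ℝ) ≤ (tentP N).card := by
  have : (tentP N).card = 2*(N/2)+1 := by
    simp only [tentP, Int.card_Icc]
    have : ((N:ℤ) + N/2 + 1 - ((N:ℤ) - N/2)) = 2*((N:ℤ)/2)+1 := by ring
    rw [this]
    omega
  rw [this]
  have : N ≤ 2*(N/2)+1 := by omega
  exact_mod_cast this

lemma tent_ge_half_mem {k : ℤ} (h : k ∈ tentP N) : 1/2 ≤ tent N k := by
  apply tent_ge_half hN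
  simp only [tentP, Finset.mem_Icc] at h
  have h2 : |k - (N:ℤ)| ≤ (N:ℤ)/2 := abs_le.mpr (by omega)
  omega

lemma S2_le : ∑ k ∈ tentS N, tent N k ^ 2 ≤ 5 * N := by
  calc ∑ k ∈ tentS N, tent N k ^ 2 ≤ ∑ _k ∈ tentS N, (1:ℝ) := by
        apply Finset.sum_le_sum
        intro k _
        have h1 := tent_nonneg (N := N) k
        have h2 := tent_le_one hN k
        nlinarith
    _ = ((2*N+3 : ℕ) : ℝ) := by rw [Finset.sum_const, card_tentS hN]; simp
    _ ≤ 5 * N := by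
        have h5 : (1:ℝ) ≤ N := by exact_mod_cast hN
        push_cast; linarith

lemma S2_ge : (N : ℝ)/4 ≤ ∑ k ∈ tentS N, tent N k ^ 2 := by
  have h1 : ∑ k ∈ tentP N, tent N k ^ 2 ≤ ∑ k ∈ tentS N, tent N k ^ 2 :=
    Finset.sum_le_sum_of_subset_of_nonneg tentP_subset (fun k _ _ => by positivity)
  refine le_trans ?_ h1
  calc (N:ℝ)/4 ≤ (tentP N).card * (1/4 : ℝ) := by
        have := card_tentP_ge hN; linarith
    _ ≤ ∑ k ∈ tentP N, tent N k ^ 2 := by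
        rw [← nsmul_eq_mul]
        apply Finset.card_nsmul_le_sum
        intro k hk
        have := tent_ge_half_mem hN hk
        nlinarith [tent_nonneg (N := N) k]

lemma Sr_ge {r : ℝ} (hr0 : 0 ≤ r) (hr6 : r ≤ 6) :
    (N : ℝ)/64 ≤ ∑ k ∈ tentS N, tent N k ^ r := by
  have key : ∀ k ∈ tentP N, (1/64 : ℝ) ≤ tent N k ^ r := by
    intro k hk
    have h2 := tent_ge_half_mem hN hk
    have hb : ((1:ℝ)/2) ^ r ≤ tent N k ^ r := Real.rpow_le_rpow (by norm_num) h2 hr0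
    have hc : ((1:ℝ)/2) ^ (6:ℝ) ≤ ((1:ℝ)/2) ^ r :=
      Real.rpow_le_rpow_of_exponent_ge (by norm_num) (by norm_num) hr6
    have h6 : ((1:ℝ)/2) ^ (6:ℝ) = 1/64 := by
      rw [show (6:ℝ) = ((6:ℕ):ℝ) by norm_num, Real.rpow_natCast]; norm_num
    linarith
  have h1 : ∑ k ∈ tentP N, tent N k ^ r ≤ ∑ k ∈ tentS N, tent N k ^ r :=
    Finset.sum_le_sum_of_subset_of_nonneg tentP_subset
      (fun k _ _ => Real.rpow_nonneg (tent_nonneg k) r)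
  refine le_trans ?_ h1
  calc (N:ℝ)/64 ≤ (tentP N).card * (1/64 : ℝ) := by
        have := card_tentP_ge hN; linarith
    _ ≤ ∑ k ∈ tentP N, tent N k ^ r := by
        rw [← nsmul_eq_mul]
        exact Finset.card_nsmul_le_sum _ _ _ key

lemma T_le : ∑ k ∈ tentS N, gterm N k ≤ 10 / N := by
  have hN' : (0:ℝ) < N := by exact_mod_cast hN
  calc ∑ k ∈ tentS N, gterm N k ≤ ∑ _k ∈ tentS N, (2 / (N:ℝ)^2) := by
        apply Finset.sum_le_sum
        intro k _
        have h1 : |tent N (k+1) - tent N k| ≤ 1/N := tent_lip hN _ _ (by simp)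
        have h2 : |tent N (k-1) - tent N k| ≤ 1/N := tent_lip hN _ _ (by simp)
        have e1 : (tent N (k+1) - tent N k)^2 ≤ (1/(N:ℝ))^2 := by
          rw [← sq_abs]; exact pow_le_pow_left₀ (abs_nonneg _) h1 2
        have e2 : (tent N (k-1) - tent N k)^2 ≤ (1/(N:ℝ))^2 := by
          rw [← sq_abs]; exact pow_le_pow_left₀ (abs_nonneg _) h2 2
        have e3 : 2 / (N:ℝ)^2 = (1/(N:ℝ))^2 + (1/(N:ℝ))^2 := by ring
        simp only [gterm]; linarith
    _ = ((2*N+3 : ℕ) : ℝ) * (2 / (N:ℝ)^2) := by rw [Finset.sum_const, card_tentS hN]; simp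
    _ ≤ 5*(N:ℝ) * (2 / (N:ℝ)^2) := by
        have h3 : ((2*N+3 : ℕ) : ℝ) ≤ 5*N := by
          have h5 : (1:ℝ) ≤ N := by exact_mod_cast hN
          push_cast; linarith
        have h4 : (0:ℝ) ≤ 2 / (N:ℝ)^2 := by positivity
        nlinarith
    _ = 10 / N := by field_simp; ring

end sums

lemma summable_pi_prod {d : ℕ} (s : Finset ℤ) (f : Fin d → ℤ → ℝ)
    (hf : ∀ i, ∀ k ∉ s, f i k = 0) :
    Summable (fun x : ZLat d => ∏ i, f i (x i)) := by
  apply summable_of_ne_finset_zero (s := Fintype.piFinset fun _ => s)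
  intro x hx
  obtain ⟨i, hi⟩ := not_forall.mp (Fintype.mem_piFinset.not.mp hx)
  exact Finset.prod_eq_zero (Finset.mem_univ i) (hf i _ hi)

lemma tsum_pi_prod {d : ℕ} (s : Finset ℤ) (f : Fin d → ℤ → ℝ)
    (hf : ∀ i, ∀ k ∉ s, f i k = 0) :
    ∑' x : ZLat d, ∏ i, f i (x i) = ∏ i, ∑ k ∈ s, f i k := by
  rw [Finset.prod_univ_sum]
  apply tsum_eq_sum
  intro x hx
  obtain ⟨i, hi⟩ := not_forall.mp (Fintype.mem_piFinset.not.mp hx)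
  exact Finset.prod_eq_zero (Finset.mem_univ i) (hf i _ hi)

noncomputable def S2 (N : ℕ) : ℝ := ∑ k ∈ tentS N, tent N k ^ 2
noncomputable def Sg (N : ℕ) : ℝ := ∑ k ∈ tentS N, gterm N k
noncomputable def Sr (N : ℕ) (r : ℝ) : ℝ := ∑ k ∈ tentS N, tent N k ^ r

noncomputable def testv (d N : ℕ) (a : ℝ) : ZLat d → ℂ :=
  fun x => ((a * ∏ i, tent N (x i) : ℝ) : ℂ)

section dd
variable {d N : ℕ} (hN : 1 ≤ N) {a : ℝ} (ha : 0 ≤ a)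

lemma hf2 (hN : 1 ≤ N) : ∀ i : Fin d, ∀ k ∉ tentS N, tent N k ^ 2 = 0 :=
  fun _ k hk => by rw [tent_zero_outside hN hk]; ring

include ha in
lemma norm_testv (x : ZLat d) : ‖testv d N a x‖ = a * ∏ i, tent N (x i) := by
  rw [testv, Complex.norm_real, Real.norm_eq_abs, abs_of_nonneg]
  exact mul_nonneg ha (Finset.prod_nonneg fun i _ => tent_nonneg _)

include hN ha

lemma mass_tsum : ∑' x : ZLat d, ‖testv d N a x‖ ^ 2 = a^2 * S2 N ^ d := by
  have e : ∀ x : ZLat d, ‖testv d N a x‖ ^ 2 = a^2 * ∏ i, tent N (x i) ^ 2 := by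
    intro x
    rw [norm_testv ha, mul_pow, Finset.prod_pow]
  simp only [e]
  rw [tsum_mul_left, tsum_pi_prod (tentS N) (fun _ k => tent N k ^ 2) (hf2 hN)]
  simp [S2, Finset.prod_const]

lemma testv_ell2 : Summable fun x : ZLat d => ‖testv d N a x‖ ^ 2 := by
  have e : ∀ x : ZLat d, ‖testv d N a x‖ ^ 2 = a^2 * ∏ i, tent N (x i) ^ 2 := by
    intro x
    rw [norm_testv ha, mul_pow, Finset.prod_pow]
  simp only [e]
  exact (summable_pi_prod (tentS N) (fun _ k => tent N k ^ 2) (hf2 hN)).mul_left _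

lemma nonlin_tsum {r : ℝ} (hr : 0 < r) :
    ∑' x : ZLat d, ‖testv d N a x‖ ^ r = a ^ r * Sr N r ^ d := by
  have e : ∀ x : ZLat d, ‖testv d N a x‖ ^ r = a^r * ∏ i, tent N (x i) ^ r := by
    intro x
    rw [norm_testv ha, Real.mul_rpow ha (Finset.prod_nonneg fun i _ => tent_nonneg _),
      Real.finset_prod_rpow _ _ (fun i _ => tent_nonneg _)]
  simp only [e]
  rw [tsum_mul_left, tsum_pi_prod (tentS N) (fun _ k => tent N k ^ r)
    (fun i k hk => by show tent N k ^ r = 0; rw [tent_zero_outside hN hk, Real.zero_rpow hr.ne'])]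
  simp [Sr, Finset.prod_const]

lemma grad_tsum :
    ∑' x : ZLat d, ∑ i : Fin d,
        (‖testv d N a (x + Pi.single i 1) - testv d N a x‖ ^ 2
          + ‖testv d N a (x - Pi.single i 1) - testv d N a x‖ ^ 2)
      = a^2 * (d * (Sg N * S2 N ^ (d-1))) := by
  classical
  have hfg : ∀ i : Fin d, ∀ j : Fin d, ∀ k ∉ tentS N,
      (if j = i then gterm N k else tent N k ^ 2) = 0 := by
    intro i j k hk
    by_cases hj : j = i
    · rw [if_pos hj, gterm_zero_outside hN hk]
    · rw [if_neg hj, tent_zero_outside hN hk]; ring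
  have key : ∀ (i : Fin d) (x : ZLat d),
      ‖testv d N a (x + Pi.single i 1) - testv d N a x‖ ^ 2
        + ‖testv d N a (x - Pi.single i 1) - testv d N a x‖ ^ 2
      = a^2 * ∏ j, (if j = i then gterm N (x j) else tent N (x j) ^ 2) := by
    intro i x
    have hplus : ∀ j : Fin d, (x + Pi.single i 1 : ZLat d) j = if j = i then x i + 1 else x j := by
      intro j
      by_cases hj : j = i
      · subst hj; simp
      · simp [Pi.single_eq_of_ne hj, hj]
    have hminus : ∀ j : Fin d, (x - Pi.single i 1 : ZLat d) j = if j = i then x i - 1 else x j := by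
      intro j
      by_cases hj : j = i
      · subst hj; simp
      · simp [Pi.single_eq_of_ne hj, hj]
    have prodplus : ∏ j, tent N ((x + Pi.single i 1 : ZLat d) j)
        = tent N (x i + 1) * ∏ j ∈ univ.erase i, tent N (x j) :=
      calc ∏ j, tent N ((x + Pi.single i 1 : ZLat d) j)
          = ∏ j, tent N (if j = i then x i + 1 else x j) :=
            Finset.prod_congr rfl (fun j _ => by rw [hplus j])
        _ = tent N (if i = i then x i + 1 else x i) *
              ∏ j ∈ univ.erase i, tent N (if j = i then x i + 1 else x j) :=
            (Finset.mul_prod_erase univ _ (mem_univ i)).symm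
        _ = tent N (x i + 1) * ∏ j ∈ univ.erase i, tent N (x j) := by
            rw [if_pos rfl]
            exact congrArg _ (Finset.prod_congr rfl fun j hj => by
              rw [if_neg (Finset.mem_erase.mp hj).1])
    have prodminus : ∏ j, tent N ((x - Pi.single i 1 : ZLat d) j)
        = tent N (x i - 1) * ∏ j ∈ univ.erase i, tent N (x j) :=
      calc ∏ j, tent N ((x - Pi.single i 1 : ZLat d) j)
          = ∏ j, tent N (if j = i then x i - 1 else x j) :=
            Finset.prod_congr rfl (fun j _ => by rw [hminus j])
        _ = tent N (if i = i then x i - 1 else x i) *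
              ∏ j ∈ univ.erase i, tent N (if j = i then x i - 1 else x j) :=
            (Finset.mul_prod_erase univ _ (mem_univ i)).symm
        _ = tent N (x i - 1) * ∏ j ∈ univ.erase i, tent N (x j) := by
            rw [if_pos rfl]
            exact congrArg _ (Finset.prod_congr rfl fun j hj => by
              rw [if_neg (Finset.mem_erase.mp hj).1])
    have prod_split : ∏ j, tent N (x j) = tent N (x i) * ∏ j ∈ univ.erase i, tent N (x j) :=
      (Finset.mul_prod_erase univ _ (mem_univ i)).symm
    have eplus : testv d N a (x + Pi.single i 1) - testv d N a x
        = ((a * ((tent N (x i + 1) - tent N (x i)) * ∏ j ∈ univ.erase i, tent N (x j)) : ℝ) : ℂ) := by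
      simp only [testv, ← Complex.ofReal_sub]
      congr 1
      rw [prodplus, prod_split]
      ring
    have eminus : testv d N a (x - Pi.single i 1) - testv d N a x
        = ((a * ((tent N (x i - 1) - tent N (x i)) * ∏ j ∈ univ.erase i, tent N (x j)) : ℝ) : ℂ) := by
      simp only [testv, ← Complex.ofReal_sub]
      congr 1
      rw [prodminus, prod_split]
      ring
    have isplit : ∏ j, (if j = i then gterm N (x j) else tent N (x j) ^ 2)
        = gterm N (x i) * ∏ j ∈ univ.erase i, tent N (x j) ^ 2 := by
      rw [← Finset.mul_prod_erase univ _ (mem_univ i), if_pos rfl]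
      congr 1
      exact Finset.prod_congr rfl fun j hj => by rw [if_neg (Finset.mem_erase.mp hj).1]
    rw [eplus, eminus, Complex.norm_real, Complex.norm_real, Real.norm_eq_abs,
      Real.norm_eq_abs, sq_abs, sq_abs, isplit, gterm, Finset.prod_pow]
    ring
  simp only [key]
  rw [Summable.tsum_finsetSum (fun i _ => ((summable_pi_prod (tentS N)
        (fun j k => if j = i then gterm N k else tent N k ^ 2) (hfg i)).mul_left _))]
  have e2 : ∀ i : Fin d, ∑' x : ZLat d,
      a^2 * ∏ j, (if j = i then gterm N (x j) else tent N (x j) ^ 2)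
      = a^2 * (Sg N * S2 N ^ (d-1)) := by
    intro i
    rw [tsum_mul_left, tsum_pi_prod (tentS N)
        (fun j k => if j = i then gterm N k else tent N k ^ 2) (hfg i)]
    congr 1
    rw [← Finset.mul_prod_erase univ _ (mem_univ i)]
    simp only [if_pos rfl]
    have e3 : ∀ j ∈ univ.erase i, ∑ k ∈ tentS N, (if j = i then gterm N k else tent N k ^ 2)
        = S2 N := by
      intro j hj
      simp only [if_neg (Finset.mem_erase.mp hj).1]; rfl
    rw [Finset.prod_congr rfl e3, Finset.prod_const, Finset.card_erase_of_mem (mem_univ i)]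
    congr 1
    simp [Finset.card_univ]
  rw [Finset.sum_congr rfl (fun i _ => e2 i), Finset.sum_const]
  simp only [Finset.card_univ, Fintype.card_fin, nsmul_eq_mul]
  ring

end dd

lemma pow_rpow_helper (b : ℝ) (hb : 0 < b) (s : ℝ) (d : ℕ) :
    ((b ^ d : ℝ)) ^ s = ((b ^ s) ^ d : ℝ) := by
  rw [← Real.rpow_natCast b d, ← Real.rpow_mul hb.le, mul_comm, Real.rpow_mul hb.le,
    Real.rpow_natCast]

lemma energy_bound (d N : ℕ) (hd : 1 ≤ d) (hN : 1 ≤ N) (p : ℝ) (hp : 1 < p) (hp6 : p + 1 ≤ 6)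
    (m h : ℝ) (hm : 0 < m) (hh : 0 < h) :
    ∃ v ∈ ell2 d, massZ d h v = m ∧
      energyZ d p h v ≤ 20*d*m/(h*N)^2
        - m ^ ((p+1)/2) / (p+1) * ((1/8000) * (h*(N:ℝ)) ^ (-((p-1)/2)))^d := by
  have hNpos : (0:ℝ) < N := by exact_mod_cast hN
  have hS1 : (N:ℝ)/4 ≤ S2 N := S2_ge hN
  have hS2 : S2 N ≤ 5*N := S2_le hN
  have hSpos : 0 < S2 N := lt_of_lt_of_le (by positivity) hS1
  have hR : (N:ℝ)/64 ≤ Sr N (p+1) := Sr_ge hN (by linarith) hp6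
  have hRpos : 0 < Sr N (p+1) := lt_of_lt_of_le (by positivity) hR
  have hG : Sg N ≤ 10/N := T_le hN
  set s : ℝ := (p+1)/2 with hs
  have hs1 : 1 < s := by rw [hs]; linarith
  have hs3 : s ≤ 3 := by rw [hs]; linarith
  set a : ℝ := Real.sqrt (m / (h^d * S2 N ^ d)) with hadef
  have ha : 0 ≤ a := Real.sqrt_nonneg _
  have hfrac : 0 < m / (h^d * S2 N ^ d) := by positivity
  have ha2 : a^2 = m / (h^d * S2 N ^ d) := Real.sq_sqrt hfrac.le
  refine ⟨testv d N a, testv_ell2 hN ha, ?_, ?_⟩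
  · rw [massZ, mass_tsum hN ha, ha2]
    field_simp
  · rw [energyZ, gradZ, nonlinZ, grad_tsum hN (ha := ha), nonlin_tsum hN ha (by linarith : (0:ℝ) < p + 1)]
    have hSd : (S2 N)^d = S2 N * S2 N ^ (d-1) := by
      rw [← pow_succ']
      congr 1
      omega
    -- gradient part
    have grad_le : h ^ d / h ^ 2 / 2 * (a^2 * (d * (Sg N * S2 N ^ (d-1)))) ≤ 20*d*m/(h*N)^2 := by
      rw [ha2, hSd]
      have hstep : Sg N / S2 N ≤ 40 / (N:ℝ)^2 := by
        calc Sg N / S2 N ≤ (10/(N:ℝ)) / ((N:ℝ)/4) := by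
              apply div_le_div₀ (by positivity) hG (by positivity) hS1
          _ = 40 / (N:ℝ)^2 := by field_simp; ring
      have e : h ^ d / h ^ 2 / 2 * (m / (h^d * (S2 N * S2 N ^ (d-1))) * (d * (Sg N * S2 N ^ (d-1))))
          = (d*m/(2*h^2)) * (Sg N / S2 N) := by
        have h1 : (h:ℝ)^d ≠ 0 := by positivity
        have h2 : S2 N ^ (d-1) ≠ 0 := by positivity
        field_simp
      rw [e]
      calc (d*m/(2*h^2)) * (Sg N / S2 N) ≤ (d*m/(2*h^2)) * (40/(N:ℝ)^2) := by
            apply mul_le_mul_of_nonneg_left hstep (by positivity)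
        _ = 20*d*m/(h*N)^2 := by field_simp; ring
    -- nonlinear part
    have nl_ge : m ^ s / (p+1) * ((1/8000) * (h*(N:ℝ)) ^ (-((p-1)/2)))^d
        ≤ h ^ d / (p + 1) * (a ^ (p+1) * Sr N (p+1) ^ d) := by
      have hap : a ^ (p+1) = (m / (h^d * S2 N ^ d)) ^ s := by
        rw [← ha2, ← Real.rpow_natCast a 2, ← Real.rpow_mul ha]
        congr 1
        rw [hs]; ring
      rw [hap]
      have hdiv : (m / (h^d * S2 N ^ d)) ^ s = m ^ s / ((h * S2 N)^d) ^ s := by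
        rw [Real.div_rpow hm.le (by positivity), mul_pow]
      rw [hdiv]
      have e2 : h ^ d / (p + 1) * (m ^ s / ((h * S2 N)^d) ^ s * Sr N (p+1) ^ d)
          = m ^ s / (p+1) * ((h * Sr N (p+1) / (h * S2 N) ^ s))^d := by
        rw [pow_rpow_helper _ (by positivity) s d, div_pow, mul_pow]
        have h3 : ((h * S2 N) ^ s) ^ d ≠ 0 := by positivity
        field_simp
      rw [e2]
      apply mul_le_mul_of_nonneg_left _ (by positivity)
      apply pow_le_pow_left₀ (by positivity)
      -- per-factor inequality
      have hfac : (1/8000 : ℝ) * (h*(N:ℝ)) ^ (-((p-1)/2))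
          ≤ h * Sr N (p+1) / (h * S2 N) ^ s := by
        have hden : (h * S2 N) ^ s ≤ 125 * (h ^ s * (N:ℝ) ^ s) := by
          calc (h * S2 N) ^ s ≤ (h * (5*N)) ^ s := by
                apply Real.rpow_le_rpow (by positivity) (by nlinarith) (by linarith)
            _ = h ^ s * ((5:ℝ) ^ s * (N:ℝ) ^ s) := by
                rw [show h * (5*(N:ℝ)) = h * (5 * (N:ℝ)) from rfl,
                  Real.mul_rpow hh.le (by positivity), Real.mul_rpow (by norm_num) hNpos.le]
            _ ≤ h ^ s * (125 * (N:ℝ) ^ s) := by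
                apply mul_le_mul_of_nonneg_left _ (by positivity)
                apply mul_le_mul_of_nonneg_right _ (by positivity)
                calc (5:ℝ) ^ s ≤ (5:ℝ) ^ (3:ℝ) :=
                      Real.rpow_le_rpow_of_exponent_le (by norm_num) hs3
                  _ = 125 := by
                      rw [show (3:ℝ) = ((3:ℕ):ℝ) by norm_num, Real.rpow_natCast]; norm_num
            _ = 125 * (h ^ s * (N:ℝ) ^ s) := by ring
        have hnum : h * ((N:ℝ)/64) ≤ h * Sr N (p+1) :=
          mul_le_mul_of_nonneg_left hR hh.le
        calc (1/8000 : ℝ) * (h*(N:ℝ)) ^ (-((p-1)/2))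
            ≤ h * ((N:ℝ)/64) / (125 * (h ^ s * (N:ℝ) ^ s)) := by
              have key : (h*(N:ℝ)) ^ (-((p-1)/2)) = (h*(N:ℝ)) / (h ^ s * (N:ℝ) ^ s) := by
                rw [← Real.mul_rpow hh.le hNpos.le]
                rw [show (-((p-1)/2)) = 1 - s by rw [hs]; ring]
                rw [Real.rpow_sub (by positivity), Real.rpow_one]
              rw [key]
              apply le_of_eq
              have hD : h ^ s * (N:ℝ) ^ s ≠ 0 := by positivity
              field_simp
              ring
          _ ≤ h * Sr N (p+1) / (125 * (h ^ s * (N:ℝ) ^ s)) :=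
              div_le_div₀ (by positivity) hnum (by positivity) le_rfl
          _ ≤ h * Sr N (p+1) / (h * S2 N) ^ s :=
              div_le_div₀ (by positivity) le_rfl (by positivity) hden
      exact hfac
    linarith

lemma bddBelow_energySet (d : ℕ) (p h m : ℝ) (hp : 1 < p) (hh : 0 < h) (hm : 0 ≤ m) :
    BddBelow (energyZ d p h '' {v ∈ ell2 d | massZ d h v = m}) := by
  use -(h ^ d / (p + 1) * ((m/h^d) * (m/h^d) ^ ((p-1)/2)))
  rintro y ⟨v, ⟨hv2, hvm⟩, rfl⟩
  have hsum : Summable fun x : ZLat d => ‖v x‖ ^ 2 := hv2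
  have hSig : ∑' x : ZLat d, ‖v x‖^2 = m / h^d := by
    have hhd : (h:ℝ)^d ≠ 0 := by positivity
    rw [massZ] at hvm
    rw [eq_div_iff hhd, mul_comm]
    exact hvm
  have hSig0 : (0:ℝ) ≤ m / h^d := by positivity
  have hpt : ∀ x, ‖v x‖ ^ (p+1) ≤ ‖v x‖^2 * (m/h^d) ^ ((p-1)/2) := by
    intro x
    set b := ‖v x‖ with hbdef
    have hb : 0 ≤ b := norm_nonneg _
    have hb2 : b^2 ≤ m/h^d := by
      rw [← hSig]
      exact Summable.le_tsum hsum x (fun y _ => sq_nonneg _)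
    rcases eq_or_lt_of_le hb with hb0 | hb0
    · rw [← hb0, Real.zero_rpow (by linarith)]
      positivity
    · have e1 : b ^ (p+1) = b^2 * b^(p-1) := by
        rw [← Real.rpow_natCast b 2, ← Real.rpow_add hb0]
        congr 1
        ring
      have e2 : b^(p-1) = (b^2)^((p-1)/2) := by
        rw [← Real.rpow_natCast b 2, ← Real.rpow_mul hb]
        congr 1
        ring
      rw [e1, e2]
      apply mul_le_mul_of_nonneg_left _ (sq_nonneg b)
      exact Real.rpow_le_rpow (by positivity) hb2 (by linarith)
  have hg : Summable fun x : ZLat d => ‖v x‖^2 * (m/h^d) ^ ((p-1)/2) := hsum.mul_right _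
  have hf : Summable fun x : ZLat d => ‖v x‖ ^ (p+1) :=
    Summable.of_nonneg_of_le (fun x => Real.rpow_nonneg (norm_nonneg _) _) hpt hg
  have htsum : ∑' x : ZLat d, ‖v x‖ ^ (p+1) ≤ (m/h^d) * (m/h^d) ^ ((p-1)/2) := by
    calc ∑' x : ZLat d, ‖v x‖ ^ (p+1) ≤ ∑' x : ZLat d, ‖v x‖^2 * (m/h^d) ^ ((p-1)/2) :=
          Summable.tsum_le_tsum hpt hf hg
      _ = (m/h^d) * (m/h^d) ^ ((p-1)/2) := by rw [tsum_mul_right, hSig]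
  have hgrad : 0 ≤ gradZ d h v := by
    apply mul_nonneg (by positivity)
    apply tsum_nonneg
    intro x
    apply Finset.sum_nonneg
    intro i _
    positivity
  have hnl : nonlinZ d p h v ≤ h ^ d / (p + 1) * ((m/h^d) * (m/h^d) ^ ((p-1)/2)) := by
    apply mul_le_mul_of_nonneg_left htsum (by positivity)
  rw [energyZ]
  linarith


set_option maxHeartbeats 2000000 in
/-- in the mass-subcritical regime the minimal energy is bounded away from `0`
from below, uniformly in the grid size `h ∈ (0, A]`. -/
theorem Emin_neg_uniform (d : ℕ) (hd : 1 ≤ d) (p : ℝ) (hp : 1 < p)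
    (hp' : p < 1 + 4 / (d : ℝ)) (m A : ℝ) (hm : 0 < m) (hA : 0 < A) :
    ∃ c > (0 : ℝ), ∀ h : ℝ, 0 < h → h ≤ A → Emin d p h m ≤ -c := by
  have hdR : (1:ℝ) ≤ d := by exact_mod_cast hd
  have hdpos : (0:ℝ) < d := by linarith
  set q : ℝ := (p-1)/2 with hqdef
  have hq : 0 < q := by rw [hqdef]; linarith
  set dq : ℝ := (d:ℝ) * q with hdqdef
  have hdq0 : 0 < dq := by positivity
  have hdq2 : dq < 2 := by
    have h1 : p - 1 < 4 / (d:ℝ) := by linarith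
    have h2 : (d:ℝ) * (p-1) < 4 := by
      rw [← lt_div_iff₀' hdpos]
      exact h1
    rw [hdqdef, hqdef]
    linarith
  have hp6 : p + 1 ≤ 6 := by
    have : 4 / (d:ℝ) ≤ 4 := by
      rw [div_le_iff₀ hdpos]
      nlinarith
    linarith
  set D : ℝ := m ^ ((p+1)/2) / (p+1) * ((1/8000:ℝ))^d with hDdef
  have hD : 0 < D := by
    rw [hDdef]
    have := Real.rpow_pos_of_pos hm ((p+1)/2)
    positivity
  -- choose L
  obtain ⟨L, hL⟩ : ∃ L : ℝ, (40*(d:ℝ)*m*(2:ℝ)^dq ≤ D * L ^ (2 - dq)) ∧ max A 1 ≤ L := by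
    have ht : Filter.Tendsto (fun L : ℝ => D * L ^ (2 - dq)) Filter.atTop Filter.atTop :=
      (tendsto_rpow_atTop (by linarith)).const_mul_atTop hD
    exact ((ht.eventually_ge_atTop _).and (Filter.eventually_ge_atTop (max A 1))).exists
  obtain ⟨hLK, hLA1⟩ := hL
  have hLA : A ≤ L := le_trans (le_max_left _ _) hLA1
  have hL1 : (1:ℝ) ≤ L := le_trans (le_max_right _ _) hLA1
  have hLpos : 0 < L := by linarith
  set c : ℝ := D * (L+A) ^ (-dq) / 2 with hcdef
  have hLA0 : 0 < L + A := by linarith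
  have hc : 0 < c := by
    rw [hcdef]
    have := Real.rpow_pos_of_pos hLA0 (-dq)
    positivity
  -- the key numeric inequality from the choice of L
  have hkey : 20*(d:ℝ)*m/L^2 ≤ c := by
    have h2L : (0:ℝ) < 2*L := by linarith
    have hP : (0:ℝ) < (2:ℝ)^dq := Real.rpow_pos_of_pos (by norm_num) dq
    have hQ : (0:ℝ) < L^dq := Real.rpow_pos_of_pos hLpos dq
    have e1 : ((2*L) : ℝ) ^ (-dq) = ((2:ℝ)^dq * L^dq)⁻¹ := by
      rw [Real.rpow_neg h2L.le, Real.mul_rpow (by norm_num) hLpos.le]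
    have e2 : L ^ (2 - dq) = L^2 / L^dq := by
      rw [Real.rpow_sub hLpos, ← Real.rpow_natCast L 2]
      norm_num
    have h1 : 40*(d:ℝ)*m*(2:ℝ)^dq * L^dq ≤ D * L^2 := by
      have h0 := mul_le_mul_of_nonneg_right hLK hQ.le
      rw [e2] at h0
      have e3 : D * (L^2 / L^dq) * L^dq = D * L^2 := by field_simp
      linarith
    have h2 : 20*(d:ℝ)*m/L^2 ≤ D*((2:ℝ)^dq * L^dq)⁻¹/2 := by
      rw [div_le_iff₀ (by positivity : (0:ℝ) < L^2)]
      have e4 : D*((2:ℝ)^dq * L^dq)⁻¹/2*L^2 = D*L^2/(2*((2:ℝ)^dq * L^dq)) := by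
        field_simp
      rw [e4, le_div_iff₀ (by positivity)]
      nlinarith
    have hmono : ((2*L) : ℝ) ^ (-dq) ≤ (L+A) ^ (-dq) :=
      Real.rpow_le_rpow_of_nonpos hLA0 (by linarith) (by linarith)
    rw [e1] at hmono
    have h3 : D * ((2:ℝ)^dq * L^dq)⁻¹ ≤ D * (L+A) ^ (-dq) :=
      mul_le_mul_of_nonneg_left hmono hD.le
    rw [hcdef]
    linarith
  refine ⟨c, hc, ?_⟩
  intro h hh hhA
  set N : ℕ := ⌈L/h⌉₊ with hNdef
  have hLh : 0 < L/h := by positivity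
  have hN1 : 1 ≤ N := Nat.one_le_ceil_iff.mpr hLh
  have hNpos : (0:ℝ) < N := by exact_mod_cast hN1
  have hLhN : L ≤ h * N := by
    have := Nat.le_ceil (L/h)
    rw [div_le_iff₀ hh] at this
    calc L ≤ (↑⌈L/h⌉₊ : ℝ) * h := this
      _ = h * N := by rw [hNdef]; ring
  have hhNLA : h * N ≤ L + A := by
    have h1 : (N:ℝ) < L/h + 1 := Nat.ceil_lt_add_one hLh.le
    have h2 : h * N < h * (L/h + 1) := by
      apply mul_lt_mul_of_pos_left h1 hh
    have h3 : h * (L/h + 1) = L + h := by field_simp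
    linarith
  have hhN : 0 < h * N := by positivity
  obtain ⟨v, hv2, hvm, hE⟩ := energy_bound d N hd hN1 p hp hp6 m h hm hh
  have hEmin : Emin d p h m ≤ energyZ d p h v :=
    csInf_le (bddBelow_energySet d p h m hp hh hm.le) ⟨v, ⟨hv2, hvm⟩, rfl⟩
  -- compare the bound to the L-form
  have hgradL : 20*(d:ℝ)*m/(h*N)^2 ≤ 20*(d:ℝ)*m/L^2 := by
    apply div_le_div_of_nonneg_left (by positivity) (by positivity)
    nlinarith
  have hnlL : D * (L+A) ^ (-dq)
      ≤ m ^ ((p+1)/2) / (p+1) * ((1/8000) * (h*(N:ℝ)) ^ (-((p-1)/2)))^d := by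
    have hfac : (1/8000 : ℝ) * (L+A) ^ (-q) ≤ (1/8000) * (h*(N:ℝ)) ^ (-((p-1)/2)) := by
      have : (L+A) ^ (-q) ≤ (h*(N:ℝ)) ^ (-q) :=
        Real.rpow_le_rpow_of_nonpos hhN hhNLA (by linarith)
      rw [hqdef] at this
      linarith
    have hpow : ((1/8000 : ℝ) * (L+A) ^ (-q))^d ≤ ((1/8000) * (h*(N:ℝ)) ^ (-((p-1)/2)))^d := by
      apply pow_le_pow_left₀ _ hfac
      have := Real.rpow_pos_of_pos hLA0 (-q)
      positivity
    have e3 : D * (L+A) ^ (-dq) = m ^ ((p+1)/2) / (p+1) * ((1/8000 : ℝ) * (L+A) ^ (-q))^d := by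
      rw [hDdef, mul_pow]
      have e4 : ((L+A) ^ (-q))^d = (L+A) ^ (-dq) := by
        rw [← Real.rpow_natCast ((L+A) ^ (-q)) d, ← Real.rpow_mul hLA0.le]
        congr 1
        rw [hdqdef]
        ring
      rw [e4]
      ring
    rw [e3]
    apply mul_le_mul_of_nonneg_left hpow
    have := Real.rpow_pos_of_pos hm ((p+1)/2)
    positivity
  calc Emin d p h m ≤ energyZ d p h v := hEmin
    _ ≤ 20*(d:ℝ)*m/(h*N)^2
        - m ^ ((p+1)/2) / (p+1) * ((1/8000) * (h*(N:ℝ)) ^ (-((p-1)/2)))^d := hE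
    _ ≤ 20*(d:ℝ)*m/L^2 - D * (L+A) ^ (-dq) := by linarith
    _ ≤ -c := by
        rw [hcdef] at hkey ⊢
        linarith
end
end
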